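/- Let k ≥ r ≥ 2 and p > 1, and let ℱ be a family of r-graphs such that (1) ℱ is stable with respect to T_r(n,k), and (2) π_λ(ℱ) ≤ (k)_r/k^r. Then ℱ is spectrally stable with respect to T_r(n,k) (for this p). -/

import Mathlib

open Finset

/-- The `p`-spectral radius of the `r`-uniform hypergraph on vertex set `Fin n`
with edge set `E`: the maximum of `r! * ∑_{e ∈ E} ∏_{v ∈ e} x v` over all
vectors `x` with `‖x‖_p = 1` (equivalently `∑ |x i| ^ p = 1`). -/
noncomputable def specRad (r n : ℕ) (E : Finset (Finset (Fin n))) (p : ℝ) : ℝ :=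
  sSup { y : ℝ | ∃ x : Fin n → ℝ, (∑ i : Fin n, |x i| ^ p) = 1 ∧
    y = (Nat.factorial r : ℝ) * ∑ e ∈ E, ∏ v ∈ e, x v }

/-- The edge set of the Turán `r`-graph `T_r(n,k)`: the complete `k`-partite
`r`-graph on `Fin n` whose parts (the residue classes modulo `k`) are as equal
as possible; its edges are all `r`-sets meeting each part in at most one vertex. -/
def turanEdges (r n k : ℕ) : Finset (Finset (Fin n)) :=
  Finset.univ.filter fun e : Finset (Fin n) =>
    e.card = r ∧ ∀ u ∈ e, ∀ v ∈ e, u ≠ v → (u : ℕ) % k ≠ (v : ℕ) % k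

/-- The `r`-graph on `Fin n` with edge set `E` is isomorphic to `T_r(n,k)`. -/
def IsoToTuran (r n k : ℕ) (E : Finset (Finset (Fin n))) : Prop :=
  ∃ σ : Equiv.Perm (Fin n),
    ∀ e : Finset (Fin n), e ∈ E ↔ e.image (fun v => σ v) ∈ turanEdges r n k

/-- The `r`-graph on `Fin n` with edge set `E` can be transformed into (a copy of)
`T_r(n,k)` by adding and deleting at most `m` edges. -/
def CloseToTuran (r n k : ℕ) (E : Finset (Finset (Fin n))) (m : ℝ) : Prop :=
  ∃ σ : Equiv.Perm (Fin n),
    ((symmDiff E ((turanEdges r n k).image fun e => e.image fun v => σ v)).card : ℝ) ≤ m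

/-- `E` contains a copy of the expanded clique `H_{k+1}^{(r)}`, the `r`-graph obtained
from `K_{k+1}` by enlarging each edge with a new set of `r - 2` vertices, the enlarging
sets being pairwise disjoint and disjoint from the core. Here `c` lists the `k+1` core
vertices and `g i j` (for `i < j`) is the edge containing the core pair `{c i, c j}`. -/
def ContainsExpandedClique (r k : ℕ) {n : ℕ} (E : Finset (Finset (Fin n))) : Prop :=
  ∃ (c : Fin (k + 1) ↪ Fin n) (g : Fin (k + 1) → Fin (k + 1) → Finset (Fin n)),
    (∀ i j : Fin (k + 1), i < j →
      g i j ∈ E ∧ (g i j).card = r ∧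
      g i j ∩ Finset.univ.image (fun i => c i) = {c i, c j}) ∧
    (∀ i j i' j' : Fin (k + 1), i < j → i' < j' → (i, j) ≠ (i', j') →
      g i j ∩ g i' j' ⊆ Finset.univ.image (fun i => c i))

/-- `E` contains a copy of the generalized fan `F_{k+1}^{(r)}`, whose edges are `[r]`
together with `E_{ij} ∪ {i,j}` over all pairs `{i,j} ∈ C([k+1],2) \ C([r],2)`, where the
`E_{ij}` are pairwise disjoint `(r-2)`-sets disjoint from the core `[k+1]`. -/
def ContainsGenFan (r k : ℕ) {n : ℕ} (E : Finset (Finset (Fin n))) : Prop :=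
  ∃ (c : Fin (k + 1) ↪ Fin n) (g : Fin (k + 1) → Fin (k + 1) → Finset (Fin n)),
    ((Finset.univ.filter fun i : Fin (k + 1) => (i : ℕ) < r).image (fun i => c i) ∈ E) ∧
    (∀ i j : Fin (k + 1), i < j → ¬((i : ℕ) < r ∧ (j : ℕ) < r) →
      g i j ∈ E ∧ (g i j).card = r ∧
      g i j ∩ Finset.univ.image (fun i => c i) = {c i, c j}) ∧
    (∀ i j i' j' : Fin (k + 1), i < j → i' < j' → (i, j) ≠ (i', j') →
      ¬((i : ℕ) < r ∧ (j : ℕ) < r) → ¬((i' : ℕ) < r ∧ (j' : ℕ) < r) →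
      g i j ∩ g i' j' ⊆ Finset.univ.image (fun i => c i))

/-- `E` contains a member of the family `𝒦_t^{(r)}` as a subgraph; equivalently,
there is a `t`-set `C` of vertices (the core) every pair of which is covered by an
edge of `E`. -/
def ContainsKFam (t : ℕ) {n : ℕ} (E : Finset (Finset (Fin n))) : Prop :=
  ∃ C : Finset (Fin n), C.card = t ∧
    ∀ u ∈ C, ∀ v ∈ C, u ≠ v → ∃ e ∈ E, u ∈ e ∧ v ∈ e

/-- `E` contains a member of the family `ℱ_t^{(r)}` as a subgraph; equivalently,
there is a `t`-set `C` of vertices (the core) such that some edge of `E` lies entirely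
inside `C` and every pair of vertices of `C` is covered by an edge of `E`. -/
def ContainsFFam (t : ℕ) {n : ℕ} (E : Finset (Finset (Fin n))) : Prop :=
  ∃ C : Finset (Fin n), C.card = t ∧ (∃ e ∈ E, e ⊆ C) ∧
    ∀ u ∈ C, ∀ v ∈ C, u ≠ v → ∃ e ∈ E, u ∈ e ∧ v ∈ e

/-- `E` contains a Berge-`K_t`: distinct core vertices `c 0, …, c (t-1)` and
pairwise distinct edges `φ i j` (for `i < j`) with `{c i, c j} ⊆ φ i j`. -/
def ContainsBergeClique (t : ℕ) {n : ℕ} (E : Finset (Finset (Fin n))) : Prop :=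
  ∃ (c : Fin t ↪ Fin n) (φ : Fin t → Fin t → Finset (Fin n)),
    (∀ i j : Fin t, i < j → φ i j ∈ E ∧ c i ∈ φ i j ∧ c j ∈ φ i j) ∧
    (∀ i j i' j' : Fin t, i < j → i' < j' → (i, j) ≠ (i', j') → φ i j ≠ φ i' j')

/-- `E` (on `Fin n`) contains a copy of the hypergraph `F` (with vertices in `ℕ`). -/
def ContainsCopy {n : ℕ} (E : Finset (Finset (Fin n))) (F : Finset (Finset ℕ)) : Prop :=
  ∃ f : ℕ → Fin n, Set.InjOn f ↑(F.biUnion id) ∧ ∀ e ∈ F, e.image f ∈ E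

/-- `E` is `𝓕`-free for the family `𝓕` of hypergraphs. -/
def FamFree {n : ℕ} (E : Finset (Finset (Fin n))) (𝓕 : Set (Finset (Finset ℕ))) : Prop :=
  ∀ F ∈ 𝓕, ¬ ContainsCopy E F

/-- The Lagrangian density `π_λ(𝓕)`: the supremum of `λ^(1)(H)` over all
`𝓕`-free `r`-graphs `H`. -/
noncomputable def lagrangianDensity (r : ℕ) (𝓕 : Set (Finset (Finset ℕ))) : ℝ :=
  sSup { y : ℝ | ∃ (m : ℕ) (E : Finset (Finset (Fin m))),
    (∀ e ∈ E, e.card = r) ∧ FamFree E 𝓕 ∧ y = specRad r m E 1 }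

/-- The family `𝓕` of `r`-graphs is (edge-)stable with respect to `T_r(n,k)`. -/
def StableFamily (r k : ℕ) (𝓕 : Set (Finset (Finset ℕ))) : Prop :=
  ∀ ε : ℝ, 0 < ε → ∃ δ : ℝ, 0 < δ ∧ ∃ n₀ : ℕ, ∀ n : ℕ, n₀ ≤ n →
    ∀ E : Finset (Finset (Fin n)), (∀ e ∈ E, e.card = r) → FamFree E 𝓕 →
    (1 - δ) * ((Nat.descFactorial k r : ℝ) / (k : ℝ) ^ r) * (n.choose r : ℝ) ≤ (E.card : ℝ) →
    CloseToTuran r n k E (ε * (n.choose r : ℝ))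

/-- The family `𝓕` of `r`-graphs is spectrally stable with respect to `T_r(n,k)`,
for the given `p`. -/
def SpectrallyStableFamily (p : ℝ) (r k : ℕ) (𝓕 : Set (Finset (Finset ℕ))) : Prop :=
  ∀ ε : ℝ, 0 < ε → ∃ δ : ℝ, 0 < δ ∧ ∃ n₀ : ℕ, ∀ n : ℕ, n₀ ≤ n →
    ∀ E : Finset (Finset (Fin n)), (∀ e ∈ E, e.card = r) → FamFree E 𝓕 →
    (1 - δ) * ((Nat.descFactorial k r : ℝ) / (k : ℝ) ^ r) * (n : ℝ) ^ ((r : ℝ) * (1 - 1 / p))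
      < specRad r n E p →
    CloseToTuran r n k E (ε * (n.choose r : ℝ))

/-- The codegree of `u` and `v`: the number of edges containing both. -/
def codeg {n : ℕ} (E : Finset (Finset (Fin n))) (u v : Fin n) : ℕ :=
  (E.filter fun e => u ∈ e ∧ v ∈ e).card

/-- For a partition of `Fin n` into `k` parts given by `P : Fin n → Fin k`,
`partWeight E P = ∑_{e ∈ E} #{i : e ∩ V_i ≠ ∅}`. -/
def partWeight {n k : ℕ} (E : Finset (Finset (Fin n))) (P : Fin n → Fin k) : ℕ :=
  ∑ e ∈ E, (e.image P).card

/-- General criterion (Lemma 3.3): if a family `𝓕` of `r`-graphs is stable with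
respect to `T_r(n,k)` and its Lagrangian density satisfies `π_λ(𝓕) ≤ (k)_r / k^r`,
then `𝓕` is spectrally stable with respect to `T_r(n,k)`. -/
private lemma pow_aux (a b : ℝ) (ha : 0 ≤ a) (hb : 0 ≤ b) :
    ∀ r : ℕ, b ^ (r + 1) + ((r : ℝ) + 1) * a * b ^ r ≤ (a + b) ^ (r + 1) := by
  intro r
  induction r with
  | zero => simp [add_comm]
  | succ r ih =>
    have hbr : 0 ≤ b ^ r := pow_nonneg hb r
    have h1 : (a + b) * (b ^ (r + 1) + ((r : ℝ) + 1) * a * b ^ r) ≤ (a + b) ^ (r + 2) := by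
      calc (a + b) * (b ^ (r + 1) + ((r : ℝ) + 1) * a * b ^ r)
          ≤ (a + b) * (a + b) ^ (r + 1) :=
            mul_le_mul_of_nonneg_left ih (by linarith)
        _ = (a + b) ^ (r + 2) := by ring
    have expand : (a + b) * (b ^ (r + 1) + ((r : ℝ) + 1) * a * b ^ r)
        = b ^ (r + 2) + ((r : ℝ) + 2) * a * b ^ (r + 1)
          + ((r : ℝ) + 1) * (a * a) * b ^ r := by ring
    have hnn : 0 ≤ ((r : ℝ) + 1) * (a * a) * b ^ r := by positivity
    rw [expand] at h1
    calc b ^ (r + 1 + 1) + ((r + 1 : ℕ) + 1 : ℝ) * a * b ^ (r + 1)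
        = b ^ (r + 2) + ((r : ℝ) + 2) * a * b ^ (r + 1) := by push_cast; ring
      _ ≤ (a + b) ^ (r + 2) := by linarith
      _ = (a + b) ^ (r + 1 + 1) := by ring

private lemma esymm_le {ι : Type*} [DecidableEq ι] (x : ι → ℝ) (hx : ∀ i, 0 ≤ x i)
    (s : Finset ι) :
    ∀ r : ℕ, (r.factorial : ℝ) * ∑ A ∈ Finset.powersetCard r s, ∏ v ∈ A, x v
      ≤ (∑ i ∈ s, x i) ^ r := by
  induction s using Finset.induction_on with
  | empty =>
    intro r
    cases r with
    | zero => simp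
    | succ r => rw [Finset.powersetCard_eq_empty.mpr (by simp)]; simp
  | @insert a s ha ih =>
    intro r
    cases r with
    | zero => simp
    | succ r =>
      have hdisj : Disjoint (Finset.powersetCard (r + 1) s)
          ((Finset.powersetCard r s).image (insert a)) := by
        rw [Finset.disjoint_right]
        intro A hA hA'
        simp only [Finset.mem_image] at hA
        obtain ⟨B, hB, rfl⟩ := hA
        rw [Finset.mem_powersetCard] at hA'
        exact ha (hA'.1 (Finset.mem_insert_self a B))
      have hinj : ∀ A ∈ Finset.powersetCard r s, ∀ B ∈ Finset.powersetCard r s,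
          insert a A = insert a B → A = B := by
        intro A hA B hB hAB
        rw [Finset.mem_powersetCard] at hA hB
        have haA : a ∉ A := fun h => ha (hA.1 h)
        have haB : a ∉ B := fun h => ha (hB.1 h)
        rw [← Finset.erase_insert haA, ← Finset.erase_insert haB, hAB]
      rw [Finset.powersetCard_succ_insert ha, Finset.sum_union hdisj,
        Finset.sum_image hinj, Finset.sum_insert ha]
      have hprod : ∀ A ∈ Finset.powersetCard r s,
          ∏ v ∈ insert a A, x v = x a * ∏ v ∈ A, x v := by
        intro A hA
        rw [Finset.mem_powersetCard] at hA
        exact Finset.prod_insert (fun h => ha (hA.1 h))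
      rw [Finset.sum_congr rfl hprod, ← Finset.mul_sum]
      have hsum0 : 0 ≤ ∑ i ∈ s, x i := Finset.sum_nonneg fun i _ => hx i
      have ih1 := ih (r + 1)
      have ih2 := ih r
      have key : ((r + 1).factorial : ℝ) *
          (∑ A ∈ Finset.powersetCard (r + 1) s, ∏ v ∈ A, x v
            + x a * ∑ A ∈ Finset.powersetCard r s, ∏ v ∈ A, x v)
          ≤ (∑ i ∈ s, x i) ^ (r + 1) + ((r : ℝ) + 1) * x a * (∑ i ∈ s, x i) ^ r := by
        have hfac : ((r + 1).factorial : ℝ) = ((r : ℝ) + 1) * (r.factorial : ℝ) := by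
          rw [Nat.factorial_succ]; push_cast; ring
        have t1 : ((r + 1).factorial : ℝ) * ∑ A ∈ Finset.powersetCard (r + 1) s, ∏ v ∈ A, x v
            ≤ (∑ i ∈ s, x i) ^ (r + 1) := ih1
        have t2 : ((r + 1).factorial : ℝ) * (x a * ∑ A ∈ Finset.powersetCard r s, ∏ v ∈ A, x v)
            ≤ ((r : ℝ) + 1) * x a * (∑ i ∈ s, x i) ^ r := by
          rw [hfac]
          have := mul_le_mul_of_nonneg_left ih2
            (show (0:ℝ) ≤ ((r : ℝ) + 1) * x a from
              mul_nonneg (by positivity) (hx a))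
          calc ((r : ℝ) + 1) * (r.factorial : ℝ) *
                (x a * ∑ A ∈ Finset.powersetCard r s, ∏ v ∈ A, x v)
              = (((r : ℝ) + 1) * x a) *
                ((r.factorial : ℝ) * ∑ A ∈ Finset.powersetCard r s, ∏ v ∈ A, x v) := by ring
            _ ≤ (((r : ℝ) + 1) * x a) * (∑ i ∈ s, x i) ^ r := this
            _ = ((r : ℝ) + 1) * x a * (∑ i ∈ s, x i) ^ r := by ring
        calc ((r + 1).factorial : ℝ) *
            (∑ A ∈ Finset.powersetCard (r + 1) s, ∏ v ∈ A, x v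
              + x a * ∑ A ∈ Finset.powersetCard r s, ∏ v ∈ A, x v)
            = ((r + 1).factorial : ℝ) * ∑ A ∈ Finset.powersetCard (r + 1) s, ∏ v ∈ A, x v
              + ((r + 1).factorial : ℝ) *
                (x a * ∑ A ∈ Finset.powersetCard r s, ∏ v ∈ A, x v) := by ring
          _ ≤ _ := add_le_add t1 t2
      exact key.trans (pow_aux (x a) (∑ i ∈ s, x i) (hx a) hsum0 r)

private lemma base_bound {n r : ℕ} (E : Finset (Finset (Fin n)))
    (hcard : ∀ e ∈ E, e.card = r) (x : Fin n → ℝ) (hx : ∀ i, 0 ≤ x i) :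
    (r.factorial : ℝ) * ∑ e ∈ E, ∏ v ∈ e, x v ≤ (∑ i : Fin n, x i) ^ r := by
  have hsub : E ⊆ Finset.powersetCard r Finset.univ := by
    intro e he
    rw [Finset.mem_powersetCard]
    exact ⟨Finset.subset_univ e, hcard e he⟩
  have h1 : ∑ e ∈ E, ∏ v ∈ e, x v
      ≤ ∑ A ∈ Finset.powersetCard r Finset.univ, ∏ v ∈ A, x v :=
    Finset.sum_le_sum_of_subset_of_nonneg hsub
      (fun A _ _ => Finset.prod_nonneg fun v _ => hx v)
  calc (r.factorial : ℝ) * ∑ e ∈ E, ∏ v ∈ e, x v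
      ≤ (r.factorial : ℝ) * ∑ A ∈ Finset.powersetCard r Finset.univ, ∏ v ∈ A, x v :=
        mul_le_mul_of_nonneg_left h1 (by positivity)
    _ ≤ (∑ i : Fin n, x i) ^ r := esymm_le x hx Finset.univ r

private lemma spec1_mem_le {n r : ℕ} (E : Finset (Finset (Fin n)))
    (hcard : ∀ e ∈ E, e.card = r) :
    ∀ y ∈ { y : ℝ | ∃ x : Fin n → ℝ, (∑ i : Fin n, |x i| ^ (1:ℝ)) = 1 ∧
      y = (Nat.factorial r : ℝ) * ∑ e ∈ E, ∏ v ∈ e, x v }, y ≤ 1 := by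
  rintro y ⟨x, hx, rfl⟩
  have hx1 : ∑ i : Fin n, |x i| = 1 := by
    simpa [Real.rpow_one] using hx
  have h1 : ∑ e ∈ E, ∏ v ∈ e, x v ≤ ∑ e ∈ E, ∏ v ∈ e, |x v| :=
    Finset.sum_le_sum fun e _ =>
      (le_abs_self _).trans_eq (Finset.abs_prod e x)
  calc (r.factorial : ℝ) * ∑ e ∈ E, ∏ v ∈ e, x v
      ≤ (r.factorial : ℝ) * ∑ e ∈ E, ∏ v ∈ e, |x v| :=
        mul_le_mul_of_nonneg_left h1 (by positivity)
    _ ≤ (∑ i : Fin n, |x i|) ^ r := base_bound E hcard _ (fun i => abs_nonneg _)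
    _ = 1 := by rw [hx1, one_pow]

private lemma spec1_le_one {n r : ℕ} (E : Finset (Finset (Fin n)))
    (hcard : ∀ e ∈ E, e.card = r) : specRad r n E 1 ≤ 1 :=
  Real.sSup_le (spec1_mem_le E hcard) zero_le_one

private lemma specRad_p_le {n r : ℕ} (E : Finset (Finset (Fin n)))
    (hcard : ∀ e ∈ E, e.card = r) {p : ℝ} (hp : 1 < p) {c : ℝ} (hc : 0 ≤ c)
    (hspec1 : specRad r n E 1 ≤ c) :
    specRad r n E p ≤ c ^ (1/p) * ((r.factorial : ℝ) * E.card) ^ (1 - 1/p) := by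
  have hq : Real.HolderConjugate p (p / (p - 1)) := Real.HolderConjugate.conjExponent hp
  set q : ℝ := p / (p - 1) with hqdef
  have hppos : 0 < p := hq.pos
  have hqpos : 0 < q := hq.symm.pos
  have h1q : 1 / q = 1 - 1 / p := by
    have := hq.inv_add_inv_eq_one
    rw [one_div, one_div]
    linarith
  have hFpos : (0:ℝ) < (r.factorial : ℝ) := by positivity
  apply Real.sSup_le
  · rintro y ⟨x, hx, rfl⟩
    -- Hölder
    have habs : ∀ e ∈ E, (∏ v ∈ e, |x v|) ^ p = ∏ v ∈ e, |x v| ^ p := by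
      intro e _
      rw [Real.finset_prod_rpow e _ (fun v _ => abs_nonneg _) p]
    have hhold := Real.inner_le_Lp_mul_Lq E (fun e => ∏ v ∈ e, |x v|) (fun _ => (1:ℝ)) hq
    simp only [mul_one, abs_one, Real.one_rpow, Finset.sum_const, nsmul_eq_mul] at hhold
    have habs2 : ∀ e ∈ E, (abs (∏ v ∈ e, |x v|)) ^ p = ∏ v ∈ e, |x v| ^ p := by
      intro e he
      rw [abs_of_nonneg (Finset.prod_nonneg fun v _ => abs_nonneg _)]
      exact habs e he
    rw [Finset.sum_congr rfl habs2] at hhold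
    -- the ℓ¹ bound
    have hz1 : ∑ i : Fin n, |(fun v => |x v| ^ p) i| ^ (1:ℝ) = 1 := by
      simp only [Real.rpow_one]
      calc ∑ i : Fin n, abs (|x i| ^ p) = ∑ i : Fin n, |x i| ^ p := by
            refine Finset.sum_congr rfl fun i _ => ?_
            rw [abs_of_nonneg (Real.rpow_nonneg (abs_nonneg _) _)]
        _ = 1 := hx
    have hmem : (r.factorial : ℝ) * ∑ e ∈ E, ∏ v ∈ e, |x v| ^ p ≤ specRad r n E 1 := by
      apply le_csSup ⟨1, fun y hy => spec1_mem_le E hcard y hy⟩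
      exact ⟨fun v => |x v| ^ p, hz1, rfl⟩
    have hS : ∑ e ∈ E, ∏ v ∈ e, |x v| ^ p ≤ c / (r.factorial : ℝ) := by
      rw [le_div_iff₀ hFpos]
      calc (∑ e ∈ E, ∏ v ∈ e, |x v| ^ p) * (r.factorial : ℝ)
          = (r.factorial : ℝ) * ∑ e ∈ E, ∏ v ∈ e, |x v| ^ p := by ring
        _ ≤ specRad r n E 1 := hmem
        _ ≤ c := hspec1
    have hSnn : 0 ≤ ∑ e ∈ E, ∏ v ∈ e, |x v| ^ p :=
      Finset.sum_nonneg fun e _ => Finset.prod_nonneg fun v _ =>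
        Real.rpow_nonneg (abs_nonneg _) _
    have h2 : (∑ e ∈ E, ∏ v ∈ e, |x v| ^ p) ^ (1/p) ≤ (c / (r.factorial : ℝ)) ^ (1/p) :=
      Real.rpow_le_rpow hSnn hS (by positivity)
    have hy1 : ∑ e ∈ E, ∏ v ∈ e, x v ≤ ∑ e ∈ E, ∏ v ∈ e, |x v| :=
      Finset.sum_le_sum fun e _ => (le_abs_self _).trans_eq (Finset.abs_prod e x)
    have hcnn : (0:ℝ) ≤ (E.card : ℝ) ^ (1/q) := Real.rpow_nonneg (by positivity) _
    have key : (r.factorial : ℝ) * ∑ e ∈ E, ∏ v ∈ e, x v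
        ≤ (r.factorial : ℝ) * ((c / (r.factorial : ℝ)) ^ (1/p) * (E.card : ℝ) ^ (1/q)) := by
      have := hhold.trans (mul_le_mul_of_nonneg_right h2 hcnn)
      calc (r.factorial : ℝ) * ∑ e ∈ E, ∏ v ∈ e, x v
          ≤ (r.factorial : ℝ) * ∑ e ∈ E, ∏ v ∈ e, |x v| :=
            mul_le_mul_of_nonneg_left hy1 (by positivity)
        _ ≤ (r.factorial : ℝ) * ((c / (r.factorial : ℝ)) ^ (1/p) * (E.card : ℝ) ^ (1/q)) := by
            apply mul_le_mul_of_nonneg_left _ (by positivity)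
            calc ∑ e ∈ E, ∏ v ∈ e, |x v|
                ≤ (∑ e ∈ E, ∏ v ∈ e, |x v| ^ p) ^ (1/p) * (E.card : ℝ) ^ (1/q) := hhold
              _ ≤ (c / (r.factorial : ℝ)) ^ (1/p) * (E.card : ℝ) ^ (1/q) :=
                  mul_le_mul_of_nonneg_right h2 hcnn
    refine key.trans (le_of_eq ?_)
    rw [h1q, Real.div_rpow hc hFpos.le, Real.mul_rpow hFpos.le (by positivity)]
    have hfr : (r.factorial : ℝ) ^ ((1:ℝ) - 1/p) = (r.factorial : ℝ) / (r.factorial : ℝ) ^ (1/p) := by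
      rw [Real.rpow_sub hFpos, Real.rpow_one]
    rw [hfr]
    have hFp : (0:ℝ) < (r.factorial : ℝ) ^ (1/p) := Real.rpow_pos_of_pos hFpos _
    field_simp
  · exact mul_nonneg (Real.rpow_nonneg hc _) (Real.rpow_nonneg (by positivity) _)


theorem stable_and_lagrangian_implies_spectrallyStable (k r : ℕ) (p : ℝ)
    (hr : 2 ≤ r) (hrk : r ≤ k) (hp : 1 < p)
    (𝓕 : Set (Finset (Finset ℕ)))
    (hstable : StableFamily r k 𝓕)
    (hlag : lagrangianDensity r 𝓕 ≤ (Nat.descFactorial k r : ℝ) / (k : ℝ) ^ r) :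
    SpectrallyStableFamily p r k 𝓕 := by
  have hk : 0 < k := lt_of_lt_of_le (by omega) hrk
  have hdpos : 0 < Nat.descFactorial k r := by
    rw [Nat.descFactorial_eq_factorial_mul_choose]
    exact Nat.mul_pos (Nat.factorial_pos r) (Nat.choose_pos hrk)
  have hcpos : (0:ℝ) < (Nat.descFactorial k r : ℝ) / (k : ℝ) ^ r := by
    apply div_pos
    · exact_mod_cast hdpos
    · positivity
  intro ε hε
  obtain ⟨δ₀, hδ₀, n₀, hmain⟩ := hstable ε hε
  have hq : Real.HolderConjugate p (p / (p - 1)) := Real.HolderConjugate.conjExponent hp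
  set q : ℝ := p / (p - 1) with hqdef
  have hqpos : 0 < q := hq.symm.pos
  have h1q : 1 / q = 1 - 1 / p := by
    have := hq.inv_add_inv_eq_one
    rw [one_div, one_div]
    linarith
  set δ' : ℝ := min δ₀ (1/2) with hδ'def
  have hδ'pos : 0 < δ' := lt_min hδ₀ (by norm_num)
  have hδ'le : δ' ≤ 1/2 := min_le_right _ _
  have h1δ' : (0:ℝ) < 1 - δ' := by linarith
  have h1δ'lt : 1 - δ' < 1 := by linarith
  refine ⟨1 - (1 - δ') ^ (1/q), ?_, max n₀ 1, ?_⟩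
  · have := Real.rpow_lt_one h1δ'.le h1δ'lt (show (0:ℝ) < 1/q by positivity)
    linarith
  intro n hn E hcard hfree hspec
  apply hmain n (le_trans (le_max_left _ _) hn) E hcard hfree
  set c : ℝ := (Nat.descFactorial k r : ℝ) / (k : ℝ) ^ r with hcdef
  have hn1 : (1:ℕ) ≤ n := le_trans (le_max_right _ _) hn
  have hnpos : (0:ℝ) < (n:ℝ) := by exact_mod_cast Nat.lt_of_lt_of_le Nat.zero_lt_one hn1
  have hXeq : 1 - (1 - (1 - δ') ^ (1/q)) = (1 - δ') ^ (1/q) := by ring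
  rw [hXeq] at hspec
  have hδlt : (0:ℝ) < (1 - δ') ^ (1/q) := Real.rpow_pos_of_pos h1δ' _
  -- the spectral upper bound via the Lagrangian density
  have hlag1 : specRad r n E 1 ≤ c := by
    refine le_trans (le_csSup ?_ ?_) hlag
    · refine ⟨1, ?_⟩
      rintro y ⟨m, E', hc', _, rfl⟩
      exact spec1_le_one E' hc'
    · exact ⟨n, E, hcard, hfree, rfl⟩
  have hup := specRad_p_le E hcard hp hcpos.le hlag1
  have hchain : (1 - δ') ^ (1/q) * c * (n:ℝ) ^ ((r:ℝ) * (1 - 1/p))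
      < c ^ (1/p) * ((r.factorial : ℝ) * (E.card : ℝ)) ^ (1 - 1/p) :=
    lt_of_lt_of_le hspec hup
  have hLHSpos : (0:ℝ) < (1 - δ') ^ (1/q) * c * (n:ℝ) ^ ((r:ℝ) * (1 - 1/p)) :=
    mul_pos (mul_pos hδlt hcpos) (Real.rpow_pos_of_pos hnpos _)
  have hpow := Real.rpow_lt_rpow hLHSpos.le hchain hqpos
  -- exponent arithmetic
  have hpne : p ≠ 0 := hq.ne_zero
  have hp1ne : p - 1 ≠ 0 := hq.sub_one_ne_zero
  have h2 : (1 - 1/p) * q = 1 := by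
    rw [← h1q]
    field_simp
  have haq : (r:ℝ) * (1 - 1/p) * q = (r:ℝ) := by
    have : (r:ℝ) * (1 - 1/p) * q = (r:ℝ) * ((1 - 1/p) * q) := by ring
    rw [this, h2, mul_one]
  have hexp : (1/p) * q + 1 = q := by
    have h2' : q - (1/p) * q = 1 := by
      have : (1 - 1/p) * q = q - (1/p) * q := by ring
      linarith [this ▸ h2]
    linarith
  have hinv : ((1 - δ') ^ (1/q)) ^ q = 1 - δ' := by
    rw [one_div, Real.rpow_inv_rpow h1δ'.le hqpos.ne']
  have hcq : c ^ q = c ^ ((1/p) * q) * c := by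
    rw [← Real.rpow_add_one hcpos.ne', hexp]
  have hnq : ((n:ℝ) ^ ((r:ℝ) * (1 - 1/p))) ^ q = (n:ℝ) ^ r := by
    rw [← Real.rpow_mul hnpos.le, haq, Real.rpow_natCast]
  have hD0 : (0:ℝ) ≤ (r.factorial : ℝ) * (E.card : ℝ) := by positivity
  have hDq : (((r.factorial : ℝ) * (E.card : ℝ)) ^ (1 - 1/p)) ^ q
      = (r.factorial : ℝ) * (E.card : ℝ) := by
    rw [← Real.rpow_mul hD0, h2, Real.rpow_one]
  have eqL : ((1 - δ') ^ (1/q) * c * (n:ℝ) ^ ((r:ℝ) * (1 - 1/p))) ^ q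
      = c ^ ((1/p) * q) * ((1 - δ') * c * (n:ℝ) ^ r) := by
    rw [Real.mul_rpow (mul_nonneg hδlt.le hcpos.le) (Real.rpow_nonneg hnpos.le _),
      Real.mul_rpow hδlt.le hcpos.le, hinv, hcq, hnq]
    ring
  have eqR : (c ^ (1/p) * ((r.factorial : ℝ) * (E.card : ℝ)) ^ (1 - 1/p)) ^ q
      = c ^ ((1/p) * q) * ((r.factorial : ℝ) * (E.card : ℝ)) := by
    rw [Real.mul_rpow (Real.rpow_nonneg hcpos.le _) (Real.rpow_nonneg hD0 _),
      ← Real.rpow_mul hcpos.le, hDq]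
  rw [eqL, eqR] at hpow
  have hE : (1 - δ') * c * (n:ℝ) ^ r < (r.factorial : ℝ) * (E.card : ℝ) :=
    lt_of_mul_lt_mul_left hpow (Real.rpow_pos_of_pos hcpos _).le
  -- from edge count to the choose bound
  have hdesc : (r.factorial : ℝ) * (n.choose r : ℝ) ≤ (n:ℝ) ^ r := by
    have h1 := Nat.descFactorial_le_pow n r
    have h2' := Nat.descFactorial_eq_factorial_mul_choose n r
    have : (r.factorial * n.choose r : ℕ) ≤ n ^ r := by rw [← h2']; exact h1
    exact_mod_cast this
  have step1 : (1 - δ') * c * ((r.factorial : ℝ) * (n.choose r : ℝ))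
      ≤ (1 - δ') * c * (n:ℝ) ^ r :=
    mul_le_mul_of_nonneg_left hdesc (mul_nonneg h1δ'.le hcpos.le)
  have step2 := lt_of_le_of_lt step1 hE
  have hF : (0:ℝ) < (r.factorial : ℝ) := by positivity
  have e1 : (1 - δ') * c * ((r.factorial : ℝ) * (n.choose r : ℝ))
      = (r.factorial : ℝ) * ((1 - δ') * c * (n.choose r : ℝ)) := by ring
  rw [e1] at step2
  have step3 : (1 - δ') * c * (n.choose r : ℝ) ≤ (E.card : ℝ) :=
    (lt_of_mul_lt_mul_left step2 hF.le).le
  have step4 : (1 - δ₀) * c * (n.choose r : ℝ) ≤ (1 - δ') * c * (n.choose r : ℝ) := by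
    apply mul_le_mul_of_nonneg_right _ (by positivity)
    apply mul_le_mul_of_nonneg_right _ hcpos.le
    have : δ' ≤ δ₀ := min_le_left _ _
    linarith
  linarith
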